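/- Let A be a fuzzy self-dual code in F_q^{2n} with 1/2 ∈ Im(A), let C = A_{1/2}, and suppose Im(A) = {β_1, …, β_k, 1/2, 1−β_k, …, 1−β_1} where β_1 > β_2 > ⋯ > β_k > 1/2 and k ≥ 1. Then the level cuts form a strictly increasing chain of linear codes A_{β_1} ⊊ A_{β_2} ⊊ ⋯ ⊊ A_{β_k} ⊊ C ⊊ (A_{β_k})^⊥ ⊊ ⋯ ⊊ (A_{β_1})^⊥, C is a self-dual code, and A_{1−β_j} = (A_{β_j})^⊥ for every 1 ≤ j ≤ k. -/

import Mathlib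

open scoped BigOperators

/-- A fuzzy set in `V`: a membership function with values in `[0,1]`. -/
def IsFuzzySet {V : Type*} (A : V → ℝ) : Prop :=
  ∀ x, 0 ≤ A x ∧ A x ≤ 1

/-- The upper `α`-level cut of a fuzzy set `A`. -/
def levelCut {V : Type*} (A : V → ℝ) (α : ℝ) : Set V :=
  {x | α ≤ A x}

/-- A set of vectors is an `F`-linear subspace. -/
def IsFuzzyCodeLinearSet (F : Type*) {V : Type*} [Field F] [AddCommGroup V] [Module F V]
    (s : Set V) : Prop :=
  ∃ W : Submodule F V, s = (W : Set V)

/-- A fuzzy linear code: a fuzzy set all of whose nonempty upper `α`-level cuts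
(for `α ∈ [0,1]`) are linear subspaces. -/
def IsFuzzyLinearCode (F : Type*) {V : Type*} [Field F] [AddCommGroup V] [Module F V]
    (A : V → ℝ) : Prop :=
  IsFuzzySet A ∧
    ∀ α ∈ Set.Icc (0 : ℝ) 1, (levelCut A α).Nonempty → IsFuzzyCodeLinearSet F (levelCut A α)

/-- The Euclidean dual of a set of vectors in `F^n`. -/
def dualSet {F : Type*} [Field F] {n : ℕ} (S : Set (Fin n → F)) : Set (Fin n → F) :=
  {y | ∀ x ∈ S, ∑ i, x i * y i = 0}

/-- A fuzzy self-orthogonal code: a fuzzy linear code with `|Im A| > 1` such that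
`(A_{1-α})^⊥ = A_α` for every `α ∈ Im A`. -/
def IsFuzzySelfOrthogonal {F : Type*} [Field F] {n : ℕ} (A : (Fin n → F) → ℝ) : Prop :=
  IsFuzzyLinearCode F A ∧ 1 < (Set.range A).ncard ∧
    ∀ α ∈ Set.range A, dualSet (levelCut A (1 - α)) = levelCut A α

/-- A fuzzy self-dual code: a fuzzy self-orthogonal code such that `(A_β)^⊥ = A_β`
for some `β ∈ Im A`. -/
def IsFuzzySelfDual {F : Type*} [Field F] {n : ℕ} (A : (Fin n → F) → ℝ) : Prop :=
  IsFuzzySelfOrthogonal A ∧ ∃ β ∈ Set.range A, dualSet (levelCut A β) = levelCut A β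

/-- if `A` is a fuzzy self-dual code in `F_q^{2n}` with
`Im A = {β 0, …, β (k-1), 1/2, 1 - β (k-1), …, 1 - β 0}` where
`β 0 > β 1 > ⋯ > β (k-1) > 1/2` and `k ≥ 1`, and `C = A_{1/2}`, then the level cuts
form a strictly increasing chain
`A_{β 0} ⊊ ⋯ ⊊ A_{β (k-1)} ⊊ C ⊊ (A_{β (k-1)})^⊥ ⊊ ⋯ ⊊ (A_{β 0})^⊥`,
`C` is self-dual, and `A_{1 - β j} = (A_{β j})^⊥` for every `j`. -/
theorem fuzzySelfDual_chain_structure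
    {F : Type} [Field F] [Fintype F] {n : ℕ} (hn : 1 ≤ n)
    (A : (Fin (2 * n) → F) → ℝ) (hA : IsFuzzySelfDual A)
    (hhalf : (1 : ℝ) / 2 ∈ Set.range A)
    (C : Set (Fin (2 * n) → F)) (hC : C = levelCut A (1 / 2))
    {k : ℕ} (hk : 1 ≤ k) (β : Fin k → ℝ)
    (hβanti : StrictAnti β)
    (hβhalf : ∀ j, 1 / 2 < β j)
    (hrange : Set.range A = Set.range β ∪ {(1 : ℝ) / 2} ∪ Set.range (fun j => 1 - β j)) :
    (∀ i j : Fin k, i < j → levelCut A (β i) ⊂ levelCut A (β j)) ∧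
      (∀ j : Fin k, levelCut A (β j) ⊂ C) ∧
      (∀ j : Fin k, C ⊂ dualSet (levelCut A (β j))) ∧
      (∀ i j : Fin k, i < j → dualSet (levelCut A (β j)) ⊂ dualSet (levelCut A (β i))) ∧
      dualSet C = C ∧
      (∀ j : Fin k, levelCut A (1 - β j) = dualSet (levelCut A (β j))) := by
  obtain ⟨⟨hflc, hcard, hso⟩, hsd⟩ := hA
  have hβmem : ∀ j, β j ∈ Set.range A := by
    intro j; rw [hrange]; exact Or.inl (Or.inl ⟨j, rfl⟩)
  have h1βmem : ∀ j, (1 - β j) ∈ Set.range A := by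
    intro j; rw [hrange]; exact Or.inr ⟨j, rfl⟩
  have hdual : ∀ j, levelCut A (1 - β j) = dualSet (levelCut A (β j)) := by
    intro j
    have h := hso (1 - β j) (h1βmem j)
    rw [show (1 : ℝ) - (1 - β j) = β j by ring] at h
    exact h.symm
  have hmono : ∀ a b : ℝ, a ≤ b → levelCut A b ⊆ levelCut A a := by
    intro a b hab x hx; exact le_trans hab hx
  have hCd : dualSet C = C := by
    have h := hso (1/2) hhalf
    rw [show (1:ℝ) - 1/2 = 1/2 by norm_num] at h
    rw [hC]; exact h
  refine ⟨?_, ?_, ?_, ?_, hCd, hdual⟩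
  · intro i j hij
    refine ⟨hmono _ _ (le_of_lt (hβanti hij)), fun hsub => ?_⟩
    obtain ⟨x, hx⟩ := hβmem j
    have hxj : x ∈ levelCut A (β j) := le_of_eq hx.symm
    have h2 : β i ≤ A x := hsub hxj
    rw [hx] at h2
    exact absurd h2 (not_le.mpr (hβanti hij))
  · intro j
    rw [hC]
    refine ⟨hmono _ _ (le_of_lt (hβhalf j)), fun hsub => ?_⟩
    obtain ⟨x, hx⟩ := hhalf
    have hxC : x ∈ levelCut A (1/2) := le_of_eq hx.symm
    have h2 : β j ≤ A x := hsub hxC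
    rw [hx] at h2
    exact absurd h2 (not_le.mpr (hβhalf j))
  · intro j
    rw [← hdual j, hC]
    have hlt : (1 : ℝ) - β j < 1/2 := by have := hβhalf j; linarith
    refine ⟨hmono _ _ (le_of_lt hlt), fun hsub => ?_⟩
    obtain ⟨x, hx⟩ := h1βmem j
    have hxj : x ∈ levelCut A (1 - β j) := le_of_eq hx.symm
    have h2 : (1:ℝ)/2 ≤ A x := hsub hxj
    rw [hx] at h2
    exact absurd h2 (not_le.mpr hlt)
  · intro i j hij
    rw [← hdual i, ← hdual j]
    have hlt : (1 : ℝ) - β i < 1 - β j := by have := hβanti hij; linarith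
    refine ⟨hmono _ _ (le_of_lt hlt), fun hsub => ?_⟩
    obtain ⟨x, hx⟩ := h1βmem i
    have hxi : x ∈ levelCut A (1 - β i) := le_of_eq hx.symm
    have h2 : (1:ℝ) - β j ≤ A x := hsub hxi
    rw [hx] at h2
    exact absurd h2 (not_le.mpr hlt)
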